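/- Let V̄_t = X^T X + γI where X is a t×d real matrix and γ > 0, and let β̂ = V̄_t^{-1} X^T (Xβ + η) for β ∈ ℝ^d and η ∈ ℝ^t. Then for any x ∈ ℝ^d, x·(β̂ − β) = ⟨x, X^T η⟩_{V̄_t^{-1}} − γ·⟨x, β⟩_{V̄_t^{-1}}, where ⟨u, v⟩_A := u^T A v. Consequently, by Cauchy–Schwarz for the inner product induced by the positive definite matrix V̄_t^{-1}, |x·(β̂ − β)| ≤ ‖x‖_{V̄_t^{-1}} · (‖X^T η‖_{V̄_t^{-1}} + γ·‖β‖_{V̄_t^{-1}}). -/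

import Mathlib

open Matrix
open scoped MatrixOrder

private lemma dot_cauchy {d : ℕ} (a b : Fin d → ℝ) :
    |a ⬝ᵥ b| ≤ Real.sqrt (a ⬝ᵥ a) * Real.sqrt (b ⬝ᵥ b) := by
  simp only [dotProduct]
  calc |∑ i, a i * b i| ≤ ∑ i, |a i| * |b i| := by
        simpa [abs_mul] using Finset.abs_sum_le_sum_abs (fun i => a i * b i) Finset.univ
    _ ≤ Real.sqrt (∑ i, |a i| ^ 2) * Real.sqrt (∑ i, |b i| ^ 2) :=
        Real.sum_mul_le_sqrt_mul_sqrt _ _ _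
    _ = Real.sqrt (∑ i, a i * a i) * Real.sqrt (∑ i, b i * b i) := by
        simp [sq_abs, pow_two]

private lemma psd_cauchy {d : ℕ} {A : Matrix (Fin d) (Fin d) ℝ} (hA : A.PosSemidef)
    (u v : Fin d → ℝ) :
    |u ⬝ᵥ A.mulVec v| ≤ Real.sqrt (u ⬝ᵥ A.mulVec u) * Real.sqrt (v ⬝ᵥ A.mulVec v) := by
  set S := CFC.sqrt A with hS
  have hsym : Sᵀ = S := by
    have := (CFC.sqrt_nonneg A).posSemidef.isHermitian
    simpa [Matrix.IsHermitian, Matrix.conjTranspose_eq_transpose_of_trivial, hS] using this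
  have key : ∀ w z : Fin d → ℝ, w ⬝ᵥ A.mulVec z = (S.mulVec w) ⬝ᵥ (S.mulVec z) := by
    intro w z
    rw [← CFC.sqrt_mul_sqrt_self A hA.nonneg, ← hS, ← Matrix.mulVec_mulVec,
      Matrix.dotProduct_mulVec w S, ← Matrix.mulVec_transpose, hsym]
  rw [key u v, key u u, key v v]
  exact dot_cauchy _ _

theorem stmt16 {t d : ℕ} (X : Matrix (Fin t) (Fin d) ℝ) (γ : ℝ) (hγ : 0 < γ)
    (β : Fin d → ℝ) (η : Fin t → ℝ) (x : Fin d → ℝ)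
    (V : Matrix (Fin d) (Fin d) ℝ) (hV : V = Xᵀ * X + γ • (1 : Matrix (Fin d) (Fin d) ℝ))
    (βhat : Fin d → ℝ) (hβhat : βhat = V⁻¹.mulVec (Xᵀ.mulVec (X.mulVec β + η))) :
    x ⬝ᵥ (βhat - β)
        = x ⬝ᵥ V⁻¹.mulVec (Xᵀ.mulVec η) - γ * (x ⬝ᵥ V⁻¹.mulVec β) ∧
      |x ⬝ᵥ (βhat - β)|
        ≤ Real.sqrt (x ⬝ᵥ V⁻¹.mulVec x) *
            (Real.sqrt ((Xᵀ.mulVec η) ⬝ᵥ V⁻¹.mulVec (Xᵀ.mulVec η))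
              + γ * Real.sqrt (β ⬝ᵥ V⁻¹.mulVec β)) := by
  -- positive definiteness of V
  have hsmul : (γ • (1 : Matrix (Fin d) (Fin d) ℝ)).PosDef := by
    refine Matrix.PosDef.of_dotProduct_mulVec_pos (by simp [Matrix.IsHermitian]) fun v hv => ?_
    have hvv : 0 < star v ⬝ᵥ v := by
      rw [Matrix.dotProduct_star_self_pos_iff]
      exact hv
    simpa [Matrix.smul_mulVec, dotProduct_smul] using mul_pos hγ hvv
  have hXX : (Xᵀ * X).PosSemidef := by
    have := Matrix.posSemidef_conjTranspose_mul_self X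
    simpa [Matrix.conjTranspose_eq_transpose_of_trivial] using this
  have hVpd : V.PosDef := hV ▸ Matrix.PosDef.posSemidef_add hXX hsmul
  have hinv : V⁻¹ * V = 1 :=
    Matrix.nonsing_inv_mul V ((Matrix.isUnit_iff_isUnit_det V).mp hVpd.isUnit)
  -- key vector identity
  have hvec : βhat - β = V⁻¹.mulVec (Xᵀ.mulVec η) - γ • V⁻¹.mulVec β := by
    have hXXV : Xᵀ * X = V - γ • (1 : Matrix (Fin d) (Fin d) ℝ) := by
      rw [hV]; abel
    have : βhat = V⁻¹.mulVec ((Xᵀ * X).mulVec β) + V⁻¹.mulVec (Xᵀ.mulVec η) := by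
      rw [hβhat, Matrix.mulVec_add, Matrix.mulVec_add]
      simp [Matrix.mulVec_mulVec]
    rw [this, hXXV, Matrix.sub_mulVec, Matrix.mulVec_sub, Matrix.mulVec_mulVec, hinv,
      Matrix.one_mulVec, Matrix.smul_mulVec, Matrix.one_mulVec,
      Matrix.mulVec_smul]
    abel
  have hid : x ⬝ᵥ (βhat - β)
      = x ⬝ᵥ V⁻¹.mulVec (Xᵀ.mulVec η) - γ * (x ⬝ᵥ V⁻¹.mulVec β) := by
    rw [hvec, dotProduct_sub, dotProduct_smul, smul_eq_mul]
  refine ⟨hid, ?_⟩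
  have hApsd : (V⁻¹).PosSemidef := hVpd.inv.posSemidef
  calc |x ⬝ᵥ (βhat - β)|
      ≤ |x ⬝ᵥ V⁻¹.mulVec (Xᵀ.mulVec η)| + γ * |x ⬝ᵥ V⁻¹.mulVec β| := by
        rw [hid]
        refine (abs_sub _ _).trans ?_
        rw [abs_mul, abs_of_pos hγ]
    _ ≤ Real.sqrt (x ⬝ᵥ V⁻¹.mulVec x) *
          Real.sqrt ((Xᵀ.mulVec η) ⬝ᵥ V⁻¹.mulVec (Xᵀ.mulVec η))
        + γ * (Real.sqrt (x ⬝ᵥ V⁻¹.mulVec x) * Real.sqrt (β ⬝ᵥ V⁻¹.mulVec β)) := by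
        gcongr
        · exact psd_cauchy hApsd x (Xᵀ.mulVec η)
        · exact psd_cauchy hApsd x β
    _ = Real.sqrt (x ⬝ᵥ V⁻¹.mulVec x) *
          (Real.sqrt ((Xᵀ.mulVec η) ⬝ᵥ V⁻¹.mulVec (Xᵀ.mulVec η))
            + γ * Real.sqrt (β ⬝ᵥ V⁻¹.mulVec β)) := by ring
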